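/- Let the pairs (S_{1,i},S_{2,i}), i = 1,…,n, be i.i.d. finite-valued, let M1, M2 be finite-valued random variables that are mutually independent and jointly independent of (S1^n,S2^n), and let M12 = f12(M1,S1^n) and M21 = f21(M2,M12,S2^n) for deterministic functions f12, f21. Then for every i ∈ {1,…,n}, (M2,S2^n) is conditionally independent of (M1,S1^n) given (S_{2,i}, M12, S1^{i−1}, S2_{i+1}^n, M21); that is, the Markov chain (M2,S2^n) − (S_{2,i}, M12, S1^{i−1}, S2_{i+1}^n, M21) − (M1,S1^n) holds. -/
import Mathlib


open scoped BigOperators Classical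
open Finset

namespace Paper

variable {Ω : Type} [Fintype Ω]

/-- `pr μ X a` is the probability that the random variable `X` takes the value `a`
under the pmf `μ` on the finite sample space `Ω`. -/
noncomputable def pr {A : Type} (μ : Ω → ℝ) (X : Ω → A) (a : A) : ℝ :=
  ∑ ω, if X ω = a then μ ω else 0

/-- `μ` is a probability mass function on the finite space `Ω`. -/
def IsPMF (μ : Ω → ℝ) : Prop := (∀ ω, 0 ≤ μ ω) ∧ ∑ ω, μ ω = 1

/-- Shannon entropy (in bits) of the random variable `X` under `μ`. -/
noncomputable def ent {A : Type} [Fintype A] (μ : Ω → ℝ) (X : Ω → A) : ℝ :=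
  -∑ a, pr μ X a * Real.logb 2 (pr μ X a)

/-- Mutual information `I(X;Y)` (in bits) under `μ`. -/
noncomputable def mi {A B : Type} [Fintype A] [Fintype B] (μ : Ω → ℝ)
    (X : Ω → A) (Y : Ω → B) : ℝ :=
  ent μ X + ent μ Y - ent μ (fun ω => (X ω, Y ω))

/-- Conditional mutual information `I(X;Y|Z)` (in bits) under `μ`. -/
noncomputable def cmi {A B C : Type} [Fintype A] [Fintype B] [Fintype C] (μ : Ω → ℝ)
    (X : Ω → A) (Y : Ω → B) (Z : Ω → C) : ℝ :=
  ent μ (fun ω => (X ω, Z ω)) + ent μ (fun ω => (Y ω, Z ω))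
    - ent μ (fun ω => (X ω, Y ω, Z ω)) - ent μ Z

/-- `X` and `Y` are conditionally independent given `Z` under `μ`:
`P(X = a, Y = b | Z = c) = P(X = a | Z = c) · P(Y = b | Z = c)`
whenever `P(Z = c) ≠ 0`. -/
def CondIndep {A B C : Type} (μ : Ω → ℝ) (X : Ω → A) (Y : Ω → B) (Z : Ω → C) : Prop :=
  ∀ a b c, pr μ Z c ≠ 0 →
    pr μ (fun ω => (X ω, Y ω, Z ω)) (a, b, c) * pr μ Z c
      = pr μ (fun ω => (X ω, Z ω)) (a, c) * pr μ (fun ω => (Y ω, Z ω)) (b, c)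




lemma pr_comp {A T' : Type} [Fintype T'] (μ : Ω → ℝ) (Tf : Ω → T') (g : T' → A) (a : A) :
    pr μ (fun ω => g (Tf ω)) a = ∑ t, if g t = a then pr μ Tf t else 0 := by
  simp only [pr]
  have : ∀ t : T', (if g t = a then ∑ ω : Ω, if Tf ω = t then μ ω else 0 else 0)
      = ∑ ω : Ω, if Tf ω = t then (if g t = a then μ ω else 0) else 0 := by
    intro t; split
    · rfl
    · simp
  rw [Finset.sum_congr rfl (fun t _ => this t), Finset.sum_comm]
  refine Finset.sum_congr rfl fun ω _ => ?_
  rw [Finset.sum_eq_single (Tf ω)]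
  · simp
  · intro t _ ht; simp [Ne.symm ht]
  · simp

lemma pr_comp_nu {A T' : Type} [Fintype T'] (μ : Ω → ℝ) (Tf : Ω → T') (ν : T' → ℝ)
    (hν : ∀ t, pr μ Tf t = ν t) (g : T' → A) (W : Ω → A) (hW : ∀ ω, W ω = g (Tf ω)) (a : A) :
    pr μ W a = ∑ t, if g t = a then ν t else 0 := by
  have hWg : W = fun ω => g (Tf ω) := funext hW
  rw [hWg, pr_comp]
  exact Finset.sum_congr rfl (fun t _ => by rw [hν])

lemma abstract {X' Y' C T' : Type} [Fintype X'] [Fintype Y'] [Fintype T']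
    (gX : T' → X') (gY : T' → Y') (gZ : T' → C) (ν : T' → ℝ) (F : X' → ℝ) (G : Y' → ℝ)
    (a : X') (b : Y') (c : C)
    (hbij : Function.Bijective (fun t => (gX t, gY t)))
    (key1 : ∀ t, gZ t = c → ν t = F (gX t) * G (gY t))
    (key2 : ∀ t, gZ t ≠ c → F (gX t) * G (gY t) = 0) :
    (∑ t, @ite ℝ ((gX t, gY t, gZ t) = (a, b, c)) (Classical.propDecidable _) (ν t) 0)
        * (∑ t, @ite ℝ (gZ t = c) (Classical.propDecidable _) (ν t) 0)
      = (∑ t, @ite ℝ ((gX t, gZ t) = (a, c)) (Classical.propDecidable _) (ν t) 0)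
        * (∑ t, @ite ℝ ((gY t, gZ t) = (b, c)) (Classical.propDecidable _) (ν t) 0) := by
  have key : ∀ t, (if gZ t = c then ν t else 0) = F (gX t) * G (gY t) := by
    intro t
    by_cases h : gZ t = c
    · rw [if_pos h]; exact key1 t h
    · rw [if_neg h]; exact (key2 t h).symm
  have hsum : ∀ (φ : X' → ℝ) (ψ : Y' → ℝ),
      (∑ t, φ (gX t) * ψ (gY t)) = (∑ x, φ x) * (∑ y, ψ y) := by
    intro φ ψ
    calc ∑ t, φ (gX t) * ψ (gY t) = ∑ p : X' × Y', φ p.1 * ψ p.2 :=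
          Fintype.sum_bijective _ hbij _ _ (fun t => rfl)
      _ = (∑ x, φ x) * (∑ y, ψ y) := by
          rw [Finset.sum_mul_sum]; exact Fintype.sum_prod_type _
  have h1 : (∑ t, @ite ℝ ((gX t, gY t, gZ t) = (a, b, c)) (Classical.propDecidable _) (ν t) 0)
      = (∑ x, if x = a then F a else 0) * (∑ y, if y = b then G b else 0) := by
    rw [← hsum]
    refine Finset.sum_congr rfl fun t _ => ?_
    by_cases hx : gX t = a
    · by_cases hy : gY t = b
      · simp only [Prod.mk.injEq, hx, hy, true_and, if_true]
        rw [key t, hx, hy]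
      · simp [Prod.mk.injEq, hx, hy]
    · simp [Prod.mk.injEq, hx]
  have h2 : (∑ t, @ite ℝ (gZ t = c) (Classical.propDecidable _) (ν t) 0) = (∑ x, F x) * (∑ y, G y) := by
    rw [← hsum]
    exact Finset.sum_congr rfl fun t _ => key t
  have h3 : (∑ t, @ite ℝ ((gX t, gZ t) = (a, c)) (Classical.propDecidable _) (ν t) 0)
      = (∑ x, if x = a then F a else 0) * (∑ y, G y) := by
    rw [← hsum]
    refine Finset.sum_congr rfl fun t _ => ?_
    by_cases hx : gX t = a
    · simp only [Prod.mk.injEq, hx, true_and, if_true]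
      rw [key t, hx]
    · simp [Prod.mk.injEq, hx]
  have h4 : (∑ t, @ite ℝ ((gY t, gZ t) = (b, c)) (Classical.propDecidable _) (ν t) 0)
      = (∑ x, F x) * (∑ y, if y = b then G b else 0) := by
    rw [← hsum]
    refine Finset.sum_congr rfl fun t _ => ?_
    by_cases hy : gY t = b
    · simp only [Prod.mk.injEq, hy, true_and, if_true]
      rw [key t, hy]
    · simp [Prod.mk.injEq, hy]
  have hFa : (∑ x, if x = a then F a else 0) = F a := by simp
  have hGb : (∑ y, if y = b then G b else 0) = G b := by simp
  rw [h1, h2, h3, h4, hFa, hGb]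
  ring

lemma prod_split {n : ℕ} (i : Fin n) (f : Fin n → ℝ) :
    ∏ j, f j = (∏ j : {j : Fin n // j < i}, f j.1) * f i * ∏ j : {j : Fin n // i < j}, f j.1 := by
  rw [← Finset.prod_filter_mul_prod_filter_not Finset.univ (fun j => j < i) f]
  have h1 : (∏ j : {j : Fin n // j < i}, f j.1)
      = ∏ j ∈ Finset.univ.filter (fun j => j < i), f j :=
    (Finset.prod_subtype _ (fun x => by simp) f).symm
  have h2 : (∏ j : {j : Fin n // i < j}, f j.1)
      = ∏ j ∈ Finset.univ.filter (fun j => i < j), f j :=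
    (Finset.prod_subtype _ (fun x => by simp) f).symm
  have h3 : Finset.univ.filter (fun j : Fin n => ¬ j < i)
      = insert i (Finset.univ.filter (fun j => i < j)) := by
    ext j; simp [not_lt, le_iff_lt_or_eq, or_comm, eq_comm]
  rw [h1, h2, h3, Finset.prod_insert (by simp)]
  ring

lemma key_iff {n : ℕ} {𝒮₁ 𝒮₂ ℳ₁ ℳ₂ ℳ₁₂ ℳ₂₁ : Type}
    (f12 : ℳ₁ → (Fin n → 𝒮₁) → ℳ₁₂) (f21 : ℳ₂ → ℳ₁₂ → (Fin n → 𝒮₂) → ℳ₂₁)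
    (i : Fin n) (c1 : 𝒮₂) (c2 : ℳ₁₂) (c3 : {j : Fin n // j < i} → 𝒮₁)
    (c4 : {j : Fin n // i < j} → 𝒮₂) (c5 : ℳ₂₁)
    (m1 : ℳ₁) (m2 : ℳ₂) (s : Fin n → 𝒮₁ × 𝒮₂) :
    (((s i).2, f12 m1 (fun j => (s j).1), (fun j : {j : Fin n // j < i} => (s j.1).1),
          (fun j : {j : Fin n // i < j} => (s j.1).2),
          f21 m2 (f12 m1 (fun j => (s j).1)) (fun j => (s j).2))
        = (c1, c2, c3, c4, c5))
      ↔ (((s i).2 = c1 ∧ (∀ j : {j : Fin n // i < j}, (s j.1).2 = c4 j)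
            ∧ f21 m2 c2 (fun j => (s j).2) = c5)
        ∧ (f12 m1 (fun j => (s j).1) = c2 ∧ ∀ j : {j : Fin n // j < i}, (s j.1).1 = c3 j)) := by
  constructor
  · intro hZ
    simp only [Prod.mk.injEq, funext_iff] at hZ
    exact ⟨⟨hZ.1, fun j => hZ.2.2.2.1 j, by rw [← hZ.2.1]; exact hZ.2.2.2.2⟩,
      hZ.2.1, fun j => hZ.2.2.1 j⟩
  · rintro ⟨⟨hf1, hf2, hf3⟩, hg1, hg2⟩
    simp only [Prod.mk.injEq, funext_iff]
    exact ⟨hf1, hg1, fun j => hg2 j, fun j => hf2 j, by rw [hg1]; exact hf3⟩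

lemma key_val {n : ℕ} {𝒮₁ 𝒮₂ : Type}
    (q : 𝒮₁ × 𝒮₂ → ℝ) (i : Fin n) (c1 : 𝒮₂) (c3 : {j : Fin n // j < i} → 𝒮₁)
    (c4 : {j : Fin n // i < j} → 𝒮₂) (p1v p2v : ℝ) (s : Fin n → 𝒮₁ × 𝒮₂)
    (hf1 : (s i).2 = c1) (hf2 : ∀ j : {j : Fin n // i < j}, (s j.1).2 = c4 j)
    (hg2 : ∀ j : {j : Fin n // j < i}, (s j.1).1 = c3 j) :
    p1v * p2v * ∏ j, q (s j)
      = (p2v * ∏ j : {j : Fin n // j < i}, q (c3 j, (s j.1).2))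
        * (p1v * q ((s i).1, c1) * ∏ j : {j : Fin n // i < j}, q ((s j.1).1, c4 j)) := by
  have e1 : (∏ j : {j : Fin n // j < i}, q (c3 j, (s j.1).2))
      = ∏ j : {j : Fin n // j < i}, q (s j.1) :=
    Finset.prod_congr rfl (fun j _ => by rw [← hg2 j])
  have e2 : q ((s i).1, c1) = q (s i) := by rw [← hf1]
  have e3 : (∏ j : {j : Fin n // i < j}, q ((s j.1).1, c4 j))
      = ∏ j : {j : Fin n // i < j}, q (s j.1) :=
    Finset.prod_congr rfl (fun j _ => by rw [← hf2 j])
  rw [e1, e2, e3, prod_split i (fun j => q (s j))]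
  ring

/-- The Markov chain of Fig. 5 in the converse of Theorem 2: with `(S₁ᵢ,S₂ᵢ)` i.i.d.,
`M₁,M₂` mutually independent and independent of the states, `M₁₂ = f₁₂(M₁,S₁ⁿ)` and
`M₂₁ = f₂₁(M₂,M₁₂,S₂ⁿ)`, for every `i` the chain
`(M₂,S₂ⁿ) − (S₂ᵢ, M₁₂, S₁ⁱ⁻¹, S₂ᵢ₊₁ⁿ, M₂₁) − (M₁,S₁ⁿ)` holds. -/
theorem markov_chain_graphical
    {Ω : Type} [Fintype Ω] (μ : Ω → ℝ) (hμ : IsPMF μ)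
    {n : ℕ} {𝒮₁ 𝒮₂ ℳ₁ ℳ₂ ℳ₁₂ ℳ₂₁ : Type}
    [Fintype 𝒮₁] [Fintype 𝒮₂] [Fintype ℳ₁] [Fintype ℳ₂] [Fintype ℳ₁₂] [Fintype ℳ₂₁]
    (S1 : Fin n → Ω → 𝒮₁) (S2 : Fin n → Ω → 𝒮₂) (M1 : Ω → ℳ₁) (M2 : Ω → ℳ₂)
    (q : 𝒮₁ × 𝒮₂ → ℝ) (hq : IsPMF q)
    (hiid : ∀ s : Fin n → 𝒮₁ × 𝒮₂,
      pr μ (fun ω => fun i => (S1 i ω, S2 i ω)) s = ∏ i, q (s i))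
    (hindep : ∀ (m1 : ℳ₁) (m2 : ℳ₂) (s : Fin n → 𝒮₁ × 𝒮₂),
      pr μ (fun ω => (M1 ω, M2 ω, fun i => (S1 i ω, S2 i ω))) (m1, m2, s)
        = pr μ M1 m1 * pr μ M2 m2 * pr μ (fun ω => fun i => (S1 i ω, S2 i ω)) s)
    (f12 : ℳ₁ → (Fin n → 𝒮₁) → ℳ₁₂)
    (f21 : ℳ₂ → ℳ₁₂ → (Fin n → 𝒮₂) → ℳ₂₁)
    (M12 : Ω → ℳ₁₂) (hM12 : ∀ ω, M12 ω = f12 (M1 ω) (fun i => S1 i ω))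
    (M21 : Ω → ℳ₂₁) (hM21 : ∀ ω, M21 ω = f21 (M2 ω) (M12 ω) (fun i => S2 i ω)) :
    ∀ i : Fin n,
      CondIndep μ (fun ω => (M2 ω, fun j => S2 j ω))
        (fun ω => (M1 ω, fun j => S1 j ω))
        (fun ω => (S2 i ω, M12 ω, (fun j : {j : Fin n // j < i} => S1 j.1 ω),
          (fun j : {j : Fin n // i < j} => S2 j.1 ω), M21 ω)) := by
  intro i a b c hc
  obtain ⟨c1, c2, c3, c4, c5⟩ := c
  have hν : ∀ t : ℳ₁ × ℳ₂ × (Fin n → 𝒮₁ × 𝒮₂),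
      pr μ (fun ω => (M1 ω, M2 ω, fun j => (S1 j ω, S2 j ω))) t = (fun t : ℳ₁ × ℳ₂ × (Fin n → 𝒮₁ × 𝒮₂) => pr μ M1 t.1 * pr μ M2 t.2.1 * ∏ j, q (t.2.2 j)) t := by
    rintro ⟨m1, m2, s⟩
    rw [hindep, hiid]
  have hbij : Function.Bijective
      (fun t : ℳ₁ × ℳ₂ × (Fin n → 𝒮₁ × 𝒮₂) => ((fun t : ℳ₁ × ℳ₂ × (Fin n → 𝒮₁ × 𝒮₂) => (t.2.1, fun j => (t.2.2 j).2)) t, (fun t : ℳ₁ × ℳ₂ × (Fin n → 𝒮₁ × 𝒮₂) => (t.1, fun j => (t.2.2 j).1)) t)) := by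
    constructor
    · rintro ⟨m1, m2, s⟩ ⟨m1', m2', s'⟩ h
      simp only [Prod.mk.injEq, funext_iff] at h ⊢
      exact ⟨h.2.1, h.1.1, fun j => Prod.ext (h.2.2 j) (h.1.2 j)⟩
    · rintro ⟨⟨m2, σ2⟩, ⟨m1, σ1⟩⟩
      exact ⟨(m1, m2, fun j => (σ1 j, σ2 j)), rfl⟩
  have key1 : ∀ t : ℳ₁ × ℳ₂ × (Fin n → 𝒮₁ × 𝒮₂), (fun t : ℳ₁ × ℳ₂ × (Fin n → 𝒮₁ × 𝒮₂) => ((t.2.2 i).2, f12 t.1 (fun j => (t.2.2 j).1), (fun j : {j : Fin n // j < i} => (t.2.2 j.1).1), (fun j : {j : Fin n // i < j} => (t.2.2 j.1).2), f21 t.2.1 (f12 t.1 (fun j => (t.2.2 j).1)) (fun j => (t.2.2 j).2))) t = (c1, c2, c3, c4, c5) →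
      (fun t : ℳ₁ × ℳ₂ × (Fin n → 𝒮₁ × 𝒮₂) => pr μ M1 t.1 * pr μ M2 t.2.1 * ∏ j, q (t.2.2 j)) t = (fun x : ℳ₂ × (Fin n → 𝒮₂) => if (x.2 i = c1 ∧ (∀ j : {j : Fin n // i < j}, x.2 j.1 = c4 j) ∧ f21 x.1 c2 x.2 = c5) then pr μ M2 x.1 * ∏ j : {j : Fin n // j < i}, q (c3 j, x.2 j.1) else 0) ((fun t : ℳ₁ × ℳ₂ × (Fin n → 𝒮₁ × 𝒮₂) => (t.2.1, fun j => (t.2.2 j).2)) t) * (fun y : ℳ₁ × (Fin n → 𝒮₁) => if (f12 y.1 y.2 = c2 ∧ ∀ j : {j : Fin n // j < i}, y.2 j.1 = c3 j) then pr μ M1 y.1 * q (y.2 i, c1) * ∏ j : {j : Fin n // i < j}, q (y.2 j.1, c4 j) else 0) ((fun t : ℳ₁ × ℳ₂ × (Fin n → 𝒮₁ × 𝒮₂) => (t.1, fun j => (t.2.2 j).1)) t) := by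
    intro t h
    dsimp only
    obtain ⟨⟨hf1, hf2, hf3⟩, hg1, hg2⟩ :=
      (key_iff f12 f21 i c1 c2 c3 c4 c5 t.1 t.2.1 t.2.2).mp h
    rw [if_pos ⟨hf1, hf2, hf3⟩, if_pos ⟨hg1, hg2⟩]
    exact key_val q i c1 c3 c4 (pr μ M1 t.1) (pr μ M2 t.2.1) t.2.2 hf1 hf2 hg2
  have key2 : ∀ t : ℳ₁ × ℳ₂ × (Fin n → 𝒮₁ × 𝒮₂), (fun t : ℳ₁ × ℳ₂ × (Fin n → 𝒮₁ × 𝒮₂) => ((t.2.2 i).2, f12 t.1 (fun j => (t.2.2 j).1), (fun j : {j : Fin n // j < i} => (t.2.2 j.1).1), (fun j : {j : Fin n // i < j} => (t.2.2 j.1).2), f21 t.2.1 (f12 t.1 (fun j => (t.2.2 j).1)) (fun j => (t.2.2 j).2))) t ≠ (c1, c2, c3, c4, c5) →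
      (fun x : ℳ₂ × (Fin n → 𝒮₂) => if (x.2 i = c1 ∧ (∀ j : {j : Fin n // i < j}, x.2 j.1 = c4 j) ∧ f21 x.1 c2 x.2 = c5) then pr μ M2 x.1 * ∏ j : {j : Fin n // j < i}, q (c3 j, x.2 j.1) else 0) ((fun t : ℳ₁ × ℳ₂ × (Fin n → 𝒮₁ × 𝒮₂) => (t.2.1, fun j => (t.2.2 j).2)) t) * (fun y : ℳ₁ × (Fin n → 𝒮₁) => if (f12 y.1 y.2 = c2 ∧ ∀ j : {j : Fin n // j < i}, y.2 j.1 = c3 j) then pr μ M1 y.1 * q (y.2 i, c1) * ∏ j : {j : Fin n // i < j}, q (y.2 j.1, c4 j) else 0) ((fun t : ℳ₁ × ℳ₂ × (Fin n → 𝒮₁ × 𝒮₂) => (t.1, fun j => (t.2.2 j).1)) t) = 0 := by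
    intro t h
    dsimp only
    by_cases hf : (t.2.2 i).2 = c1 ∧ (∀ j : {j : Fin n // i < j}, (t.2.2 j.1).2 = c4 j)
        ∧ f21 t.2.1 c2 (fun j => (t.2.2 j).2) = c5
    · by_cases hg : f12 t.1 (fun j => (t.2.2 j).1) = c2
          ∧ ∀ j : {j : Fin n // j < i}, (t.2.2 j.1).1 = c3 j
      · exact absurd ((key_iff f12 f21 i c1 c2 c3 c4 c5 t.1 t.2.1 t.2.2).mpr ⟨hf, hg⟩) h
      · rw [if_neg hg, mul_zero]
    · rw [if_neg hf, zero_mul]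
  have e1 := pr_comp_nu μ (fun ω => (M1 ω, M2 ω, fun j => (S1 j ω, S2 j ω))) (fun t : ℳ₁ × ℳ₂ × (Fin n → 𝒮₁ × 𝒮₂) => pr μ M1 t.1 * pr μ M2 t.2.1 * ∏ j, q (t.2.2 j)) hν
    (fun t => ((fun t : ℳ₁ × ℳ₂ × (Fin n → 𝒮₁ × 𝒮₂) => (t.2.1, fun j => (t.2.2 j).2)) t, (fun t : ℳ₁ × ℳ₂ × (Fin n → 𝒮₁ × 𝒮₂) => (t.1, fun j => (t.2.2 j).1)) t, (fun t : ℳ₁ × ℳ₂ × (Fin n → 𝒮₁ × 𝒮₂) => ((t.2.2 i).2, f12 t.1 (fun j => (t.2.2 j).1), (fun j : {j : Fin n // j < i} => (t.2.2 j.1).1), (fun j : {j : Fin n // i < j} => (t.2.2 j.1).2), f21 t.2.1 (f12 t.1 (fun j => (t.2.2 j).1)) (fun j => (t.2.2 j).2))) t))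
    (fun ω => ((M2 ω, fun j => S2 j ω), (M1 ω, fun j => S1 j ω),
      (S2 i ω, M12 ω, (fun j : {j : Fin n // j < i} => S1 j.1 ω),
        (fun j : {j : Fin n // i < j} => S2 j.1 ω), M21 ω)))
    (fun ω => by simp only [hM21, hM12]) (a, b, (c1, c2, c3, c4, c5))
  have e2 := pr_comp_nu μ (fun ω => (M1 ω, M2 ω, fun j => (S1 j ω, S2 j ω))) (fun t : ℳ₁ × ℳ₂ × (Fin n → 𝒮₁ × 𝒮₂) => pr μ M1 t.1 * pr μ M2 t.2.1 * ∏ j, q (t.2.2 j)) hν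
    (fun t : ℳ₁ × ℳ₂ × (Fin n → 𝒮₁ × 𝒮₂) => ((t.2.2 i).2, f12 t.1 (fun j => (t.2.2 j).1), (fun j : {j : Fin n // j < i} => (t.2.2 j.1).1), (fun j : {j : Fin n // i < j} => (t.2.2 j.1).2), f21 t.2.1 (f12 t.1 (fun j => (t.2.2 j).1)) (fun j => (t.2.2 j).2)))
    (fun ω => (S2 i ω, M12 ω, (fun j : {j : Fin n // j < i} => S1 j.1 ω), (fun j : {j : Fin n // i < j} => S2 j.1 ω), M21 ω))
    (fun ω => by simp only [hM21, hM12]) (c1, c2, c3, c4, c5)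
  have e3 := pr_comp_nu μ (fun ω => (M1 ω, M2 ω, fun j => (S1 j ω, S2 j ω))) (fun t : ℳ₁ × ℳ₂ × (Fin n → 𝒮₁ × 𝒮₂) => pr μ M1 t.1 * pr μ M2 t.2.1 * ∏ j, q (t.2.2 j)) hν
    (fun t => ((fun t : ℳ₁ × ℳ₂ × (Fin n → 𝒮₁ × 𝒮₂) => (t.2.1, fun j => (t.2.2 j).2)) t, (fun t : ℳ₁ × ℳ₂ × (Fin n → 𝒮₁ × 𝒮₂) => ((t.2.2 i).2, f12 t.1 (fun j => (t.2.2 j).1), (fun j : {j : Fin n // j < i} => (t.2.2 j.1).1), (fun j : {j : Fin n // i < j} => (t.2.2 j.1).2), f21 t.2.1 (f12 t.1 (fun j => (t.2.2 j).1)) (fun j => (t.2.2 j).2))) t))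
    (fun ω => ((M2 ω, fun j => S2 j ω),
      (S2 i ω, M12 ω, (fun j : {j : Fin n // j < i} => S1 j.1 ω),
        (fun j : {j : Fin n // i < j} => S2 j.1 ω), M21 ω)))
    (fun ω => by simp only [hM21, hM12]) (a, (c1, c2, c3, c4, c5))
  have e4 := pr_comp_nu μ (fun ω => (M1 ω, M2 ω, fun j => (S1 j ω, S2 j ω))) (fun t : ℳ₁ × ℳ₂ × (Fin n → 𝒮₁ × 𝒮₂) => pr μ M1 t.1 * pr μ M2 t.2.1 * ∏ j, q (t.2.2 j)) hν
    (fun t => ((fun t : ℳ₁ × ℳ₂ × (Fin n → 𝒮₁ × 𝒮₂) => (t.1, fun j => (t.2.2 j).1)) t, (fun t : ℳ₁ × ℳ₂ × (Fin n → 𝒮₁ × 𝒮₂) => ((t.2.2 i).2, f12 t.1 (fun j => (t.2.2 j).1), (fun j : {j : Fin n // j < i} => (t.2.2 j.1).1), (fun j : {j : Fin n // i < j} => (t.2.2 j.1).2), f21 t.2.1 (f12 t.1 (fun j => (t.2.2 j).1)) (fun j => (t.2.2 j).2))) t))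
    (fun ω => ((M1 ω, fun j => S1 j ω),
      (S2 i ω, M12 ω, (fun j : {j : Fin n // j < i} => S1 j.1 ω),
        (fun j : {j : Fin n // i < j} => S2 j.1 ω), M21 ω)))
    (fun ω => by simp only [hM21, hM12]) (b, (c1, c2, c3, c4, c5))
  rw [e1, e2, e3, e4]
  exact abstract (fun t : ℳ₁ × ℳ₂ × (Fin n → 𝒮₁ × 𝒮₂) => (t.2.1, fun j => (t.2.2 j).2)) (fun t : ℳ₁ × ℳ₂ × (Fin n → 𝒮₁ × 𝒮₂) => (t.1, fun j => (t.2.2 j).1)) (fun t : ℳ₁ × ℳ₂ × (Fin n → 𝒮₁ × 𝒮₂) => ((t.2.2 i).2, f12 t.1 (fun j => (t.2.2 j).1), (fun j : {j : Fin n // j < i} => (t.2.2 j.1).1), (fun j : {j : Fin n // i < j} => (t.2.2 j.1).2), f21 t.2.1 (f12 t.1 (fun j => (t.2.2 j).1)) (fun j => (t.2.2 j).2))) (fun t : ℳ₁ × ℳ₂ × (Fin n → 𝒮₁ × 𝒮₂) => pr μ M1 t.1 * pr μ M2 t.2.1 * ∏ j, q (t.2.2 j)) (fun x : ℳ₂ ×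 (Fin n → 𝒮₂) => if (x.2 i = c1 ∧ (∀ j : {j : Fin n // i < j}, x.2 j.1 = c4 j) ∧ f21 x.1 c2 x.2 = c5) then pr μ M2 x.1 * ∏ j : {j : Fin n // j < i}, q (c3 j, x.2 j.1) else 0) (fun y : ℳ₁ × (Fin n → 𝒮₁) => if (f12 y.1 y.2 = c2 ∧ ∀ j : {j : Fin n // j < i}, y.2 j.1 = c3 j) then pr μ M1 y.1 * q (y.2 i, c1) * ∏ j : {j : Fin n // i < j}, q (y.2 j.1, c4 j) else 0) a b (c1, c2, c3, c4, c5) hbij key1 key2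


end Paper
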